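/- Let C ∈ ℝ^{m×m×m}, let v ∈ ℝ^m with ‖v‖ = 1, and let s ≥ 0 be such that ‖vᵀ C⁽ⁱ⁾‖ ≤ s in the Euclidean norm for i = 1, 2, 3, where vᵀ C⁽ⁱ⁾ is the row vector of length m² obtained by multiplying v against the i-th flattening of C. Set P = I − v vᵀ and S = [[C; P, P, P]]. Then ‖C − S‖_F ≤ 7s. -/

import Mathlib

open Matrix

/-- The congruence action on an `m × m × m` tensor. -/
def congrAct3 {m : ℕ} (C : Fin m → Fin m → Fin m → ℝ)
    (X : Matrix (Fin m) (Fin m) ℝ) : Fin m → Fin m → Fin m → ℝ :=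
  fun α β γ => ∑ i, ∑ j, ∑ k, C i j k * X α i * X β j * X γ k

private lemma contract' {m : ℕ} (v f : Fin m → ℝ) (α : Fin m) :
    ∑ i, f i * ((if α = i then (1:ℝ) else 0) - v α * v i)
      = f α - v α * ∑ i, v i * f i := by
  have : ∀ i : Fin m, f i * ((if α = i then (1:ℝ) else 0) - v α * v i)
      = (if α = i then f i else 0) - v α * (v i * f i) := by
    intro i; by_cases h : α = i <;> simp [h] <;> ring
  rw [Finset.sum_congr rfl (fun i _ => this i), Finset.sum_sub_distrib,
    Finset.sum_ite_eq, ← Finset.mul_sum]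
  simp

private lemma expand' {m : ℕ} (C : Fin m → Fin m → Fin m → ℝ) (v : Fin m → ℝ) (α β γ : Fin m) :
    congrAct3 C (1 - Matrix.vecMulVec v v) α β γ =
      C α β γ - v γ * (∑ k, v k * C α β k) - v β * (∑ j, v j * C α j γ)
        + v β * v γ * (∑ j, v j * ∑ k, v k * C α j k)
        - v α * ((∑ i, v i * C i β γ) - v γ * (∑ i, v i * ∑ k, v k * C i β k)
          - v β * (∑ i, v i * ∑ j, v j * C i j γ)
          + v β * v γ * (∑ i, v i * ∑ j, v j * ∑ k, v k * C i j k)) := by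
  have hP : ∀ x y : Fin m, (1 - Matrix.vecMulVec v v) x y
      = (if x = y then (1:ℝ) else 0) - v x * v y := by
    intro x y; simp [Matrix.sub_apply, Matrix.one_apply, Matrix.vecMulVec_apply]
  simp only [congrAct3, hP]
  have step1 : ∀ i j : Fin m,
      ∑ k, C i j k * ((if α = i then (1:ℝ) else 0) - v α * v i)
        * ((if β = j then (1:ℝ) else 0) - v β * v j)
        * ((if γ = k then (1:ℝ) else 0) - v γ * v k)
      = (C i j γ - v γ * ∑ k, v k * C i j k)
        * (((if α = i then (1:ℝ) else 0) - v α * v i)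
          * ((if β = j then (1:ℝ) else 0) - v β * v j)) := by
    intro i j
    rw [← contract' v (fun k => C i j k) γ, Finset.sum_mul]
    exact Finset.sum_congr rfl fun k _ => by ring
  rw [Finset.sum_congr rfl (fun i _ => Finset.sum_congr rfl (fun j _ => step1 i j))]
  have step2 : ∀ i : Fin m,
      ∑ j, (C i j γ - v γ * ∑ k, v k * C i j k)
        * (((if α = i then (1:ℝ) else 0) - v α * v i)
          * ((if β = j then (1:ℝ) else 0) - v β * v j))
      = ((C i β γ - v γ * ∑ k, v k * C i β k)
          - v β * ∑ j, v j * (C i j γ - v γ * ∑ k, v k * C i j k))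
        * ((if α = i then (1:ℝ) else 0) - v α * v i) := by
    intro i
    rw [← contract' v (fun j => C i j γ - v γ * ∑ k, v k * C i j k) β, Finset.sum_mul]
    exact Finset.sum_congr rfl fun j _ => by ring
  rw [Finset.sum_congr rfl (fun i _ => step2 i)]
  rw [contract' v (fun i => (C i β γ - v γ * ∑ k, v k * C i β k)
      - v β * ∑ j, v j * (C i j γ - v γ * ∑ k, v k * C i j k)) α]
  have split : ∀ (f g : Fin m → ℝ) (c : ℝ),
      ∑ j, v j * (f j - c * g j) = (∑ j, v j * f j) - c * ∑ j, v j * g j := by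
    intro f g c
    rw [Finset.mul_sum, ← Finset.sum_sub_distrib]
    exact Finset.sum_congr rfl fun j _ => by ring
  simp only [split]
  ring

private lemma cs' {m : ℕ} (v a : Fin m → ℝ) (hv : ∑ i, v i ^ 2 = 1) :
    (∑ i, v i * a i) ^ 2 ≤ ∑ i, a i ^ 2 := by
  have := Finset.sum_mul_sq_le_sq_mul_sq Finset.univ v a
  rwa [hv, one_mul] at this

/-- embedding of tensors into Euclidean space -/
private def Emb {m : ℕ} (f : Fin m → Fin m → Fin m → ℝ) :
    EuclideanSpace ℝ (Fin m × Fin m × Fin m) := WithLp.toLp 2 (fun p => f p.1 p.2.1 p.2.2)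

private lemma normEmb {m : ℕ} (f : Fin m → Fin m → Fin m → ℝ) :
    ‖Emb f‖ = Real.sqrt (∑ i, ∑ j, ∑ k, f i j k ^ 2) := by
  rw [EuclideanSpace.norm_eq]
  congr 1
  rw [Fintype.sum_prod_type]
  refine Finset.sum_congr rfl fun i _ => ?_
  rw [Fintype.sum_prod_type]
  refine Finset.sum_congr rfl fun j _ => Finset.sum_congr rfl fun k _ => ?_
  rw [Real.norm_eq_abs, sq_abs]
  rfl

private lemma normEmb_le {m : ℕ} (f : Fin m → Fin m → Fin m → ℝ) {x : ℝ} (hx : 0 ≤ x)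
    (h : ∑ i, ∑ j, ∑ k, f i j k ^ 2 ≤ x ^ 2) : ‖Emb f‖ ≤ x := by
  rw [normEmb]
  calc Real.sqrt (∑ i, ∑ j, ∑ k, f i j k ^ 2) ≤ Real.sqrt (x ^ 2) := Real.sqrt_le_sqrt h
  _ = x := Real.sqrt_sq hx

/-- If `v` is a unit vector with `‖vᵀ C⁽ⁱ⁾‖ ≤ s` for all three flattenings of `C`,
and `P = I − v vᵀ`, `S = [[C; P, P, P]]`, then `‖C − S‖_F ≤ 7s`. -/
theorem distance_to_projected_tensor_le (m : ℕ)
    (C : Fin m → Fin m → Fin m → ℝ) (v : EuclideanSpace ℝ (Fin m)) (hv : ‖v‖ = 1)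
    (s : ℝ) (hs : 0 ≤ s)
    (h1 : Real.sqrt (∑ j, ∑ k, (∑ i, v i * C i j k) ^ 2) ≤ s)
    (h2 : Real.sqrt (∑ i, ∑ k, (∑ j, v j * C i j k) ^ 2) ≤ s)
    (h3 : Real.sqrt (∑ i, ∑ j, (∑ k, v k * C i j k) ^ 2) ≤ s) :
    Real.sqrt (∑ i, ∑ j, ∑ k,
        (C i j k - congrAct3 C
          (1 - Matrix.vecMulVec (fun i => v i) (fun j => v j)) i j k) ^ 2)
      ≤ 7 * s := by
  classical
  set w : Fin m → ℝ := fun i => v i with hw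
  have hv' : ∑ i, w i ^ 2 = 1 := by
    have h := (EuclideanSpace.norm_eq v).symm.trans hv
    rw [Real.sqrt_eq_one] at h
    simpa [sq_abs] using h
  -- abbreviations
  set A1 : Fin m → Fin m → ℝ := fun j k => ∑ i, w i * C i j k with hA1
  set A2 : Fin m → Fin m → ℝ := fun i k => ∑ j, w j * C i j k with hA2
  set A3 : Fin m → Fin m → ℝ := fun i j => ∑ k, w k * C i j k with hA3
  set W1 : Fin m → ℝ := fun i => ∑ j, w j * A3 i j with hW1
  set W2 : Fin m → ℝ := fun j => ∑ i, w i * A3 i j with hW2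
  set W3 : Fin m → ℝ := fun k => ∑ i, w i * A2 i k with hW3
  set c0 : ℝ := ∑ i, w i * W1 i with hc0
  -- flattening bounds squared
  have sq_of_sqrt : ∀ X : ℝ, 0 ≤ X → Real.sqrt X ≤ s → X ≤ s ^ 2 := by
    intro X hX h
    nlinarith [Real.sq_sqrt hX, Real.sqrt_nonneg X]
  have hX1 : (∑ j, ∑ k, A1 j k ^ 2) ≤ s ^ 2 :=
    sq_of_sqrt _ (Finset.sum_nonneg fun j _ => Finset.sum_nonneg fun k _ => sq_nonneg _) h1
  have hX2 : (∑ i, ∑ k, A2 i k ^ 2) ≤ s ^ 2 :=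
    sq_of_sqrt _ (Finset.sum_nonneg fun i _ => Finset.sum_nonneg fun k _ => sq_nonneg _) h2
  have hX3 : (∑ i, ∑ j, A3 i j ^ 2) ≤ s ^ 2 :=
    sq_of_sqrt _ (Finset.sum_nonneg fun i _ => Finset.sum_nonneg fun j _ => sq_nonneg _) h3
  -- bounds on the doubly and triply contracted tensors
  have hB1 : ∑ i, W1 i ^ 2 ≤ s ^ 2 :=
    le_trans (Finset.sum_le_sum fun i _ => cs' w (fun j => A3 i j) hv') hX3
  have hB2 : ∑ j, W2 j ^ 2 ≤ s ^ 2 :=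
    le_trans (le_of_le_of_eq
      (Finset.sum_le_sum fun j _ => cs' w (fun i => A3 i j) hv') Finset.sum_comm) hX3
  have hB3 : ∑ k, W3 k ^ 2 ≤ s ^ 2 :=
    le_trans (le_of_le_of_eq
      (Finset.sum_le_sum fun k _ => cs' w (fun i => A2 i k) hv') Finset.sum_comm) hX2
  have hBc : c0 ^ 2 ≤ s ^ 2 := le_trans (cs' w W1 hv') hB1
  -- norms of the seven pieces
  have n1 : ‖Emb (fun i j k => w i * A1 j k)‖ ≤ s := by
    refine normEmb_le _ hs ?_
    have e : ∀ i, (∑ j, ∑ k, (w i * A1 j k) ^ 2) = w i ^ 2 * ∑ j, ∑ k, A1 j k ^ 2 := by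
      intro i
      rw [Finset.mul_sum]
      refine Finset.sum_congr rfl fun j _ => ?_
      rw [Finset.mul_sum]
      exact Finset.sum_congr rfl fun k _ => by ring
    calc ∑ i, ∑ j, ∑ k, (w i * A1 j k) ^ 2
        = ∑ i, w i ^ 2 * ∑ j, ∑ k, A1 j k ^ 2 := Finset.sum_congr rfl fun i _ => e i
      _ = (∑ i, w i ^ 2) * (∑ j, ∑ k, A1 j k ^ 2) := (Finset.sum_mul _ _ _).symm
      _ = ∑ j, ∑ k, A1 j k ^ 2 := by rw [hv', one_mul]
      _ ≤ s ^ 2 := hX1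
  have n2 : ‖Emb (fun i j k => w j * A2 i k)‖ ≤ s := by
    refine normEmb_le _ hs ?_
    have e : ∀ i, (∑ j, ∑ k, (w j * A2 i k) ^ 2) = ∑ k, A2 i k ^ 2 := by
      intro i
      have e2 : ∀ j, (∑ k, (w j * A2 i k) ^ 2) = w j ^ 2 * ∑ k, A2 i k ^ 2 := by
        intro j
        rw [Finset.mul_sum]
        exact Finset.sum_congr rfl fun k _ => by ring
      rw [Finset.sum_congr rfl fun j _ => e2 j, ← Finset.sum_mul, hv', one_mul]
    calc ∑ i, ∑ j, ∑ k, (w j * A2 i k) ^ 2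
        = ∑ i, ∑ k, A2 i k ^ 2 := Finset.sum_congr rfl fun i _ => e i
      _ ≤ s ^ 2 := hX2
  have n3 : ‖Emb (fun i j k => w k * A3 i j)‖ ≤ s := by
    refine normEmb_le _ hs ?_
    have e : ∀ i j, (∑ k, (w k * A3 i j) ^ 2) = A3 i j ^ 2 := by
      intro i j
      have e2 : ∀ k, (w k * A3 i j) ^ 2 = w k ^ 2 * A3 i j ^ 2 := fun k => by ring
      rw [Finset.sum_congr rfl fun k _ => e2 k, ← Finset.sum_mul, hv', one_mul]
    calc ∑ i, ∑ j, ∑ k, (w k * A3 i j) ^ 2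
        = ∑ i, ∑ j, A3 i j ^ 2 :=
          Finset.sum_congr rfl fun i _ => Finset.sum_congr rfl fun j _ => e i j
      _ ≤ s ^ 2 := hX3
  have peel : ∀ a : ℝ, (∑ k, (a * w k) ^ 2) = a ^ 2 := by
    intro a
    have e2 : ∀ k, (a * w k) ^ 2 = a ^ 2 * w k ^ 2 := fun k => by ring
    rw [Finset.sum_congr rfl fun k _ => e2 k, ← Finset.mul_sum, hv', mul_one]
  have n4 : ‖Emb (fun i j k => w j * w k * W1 i)‖ ≤ s := by
    refine normEmb_le _ hs ?_
    have e : ∀ i, (∑ j, ∑ k, (w j * w k * W1 i) ^ 2) = W1 i ^ 2 := by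
      intro i
      have e2 : ∀ j, (∑ k, (w j * w k * W1 i) ^ 2) = (W1 i * w j) ^ 2 := by
        intro j
        rw [show (∑ k, (w j * w k * W1 i) ^ 2) = ∑ k, ((W1 i * w j) * w k) ^ 2 from
          Finset.sum_congr rfl fun k _ => by ring, peel (W1 i * w j)]
      rw [Finset.sum_congr rfl fun j _ => e2 j, peel (W1 i)]
    calc ∑ i, ∑ j, ∑ k, (w j * w k * W1 i) ^ 2
        = ∑ i, W1 i ^ 2 := Finset.sum_congr rfl fun i _ => e i
      _ ≤ s ^ 2 := hB1
  have n5 : ‖Emb (fun i j k => w i * w k * W2 j)‖ ≤ s := by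
    refine normEmb_le _ hs ?_
    have e : ∀ i j, (∑ k, (w i * w k * W2 j) ^ 2) = (w i * W2 j) ^ 2 := by
      intro i j
      rw [show (∑ k, (w i * w k * W2 j) ^ 2) = ∑ k, ((w i * W2 j) * w k) ^ 2 from
        Finset.sum_congr rfl fun k _ => by ring, peel (w i * W2 j)]
    have e' : ∀ i, (∑ j, ∑ k, (w i * w k * W2 j) ^ 2) = w i ^ 2 * ∑ j, W2 j ^ 2 := by
      intro i
      rw [Finset.sum_congr rfl fun j _ => e i j, Finset.mul_sum]
      exact Finset.sum_congr rfl fun j _ => by ring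
    calc ∑ i, ∑ j, ∑ k, (w i * w k * W2 j) ^ 2
        = ∑ i, w i ^ 2 * ∑ j, W2 j ^ 2 := Finset.sum_congr rfl fun i _ => e' i
      _ = (∑ i, w i ^ 2) * (∑ j, W2 j ^ 2) := (Finset.sum_mul _ _ _).symm
      _ = ∑ j, W2 j ^ 2 := by rw [hv', one_mul]
      _ ≤ s ^ 2 := hB2
  have n6 : ‖Emb (fun i j k => w i * w j * W3 k)‖ ≤ s := by
    refine normEmb_le _ hs ?_
    have e : ∀ i j, (∑ k, (w i * w j * W3 k) ^ 2) = (w i * w j) ^ 2 * ∑ k, W3 k ^ 2 := by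
      intro i j
      rw [Finset.mul_sum]
      exact Finset.sum_congr rfl fun k _ => by ring
    have e' : ∀ i, (∑ j, ∑ k, (w i * w j * W3 k) ^ 2) = w i ^ 2 * ∑ k, W3 k ^ 2 := by
      intro i
      rw [Finset.sum_congr rfl fun j _ => e i j,
        show (∑ j, (w i * w j) ^ 2 * ∑ k, W3 k ^ 2)
          = ∑ j, ((w i * Real.sqrt (∑ k, W3 k ^ 2)) * w j) ^ 2 from
          Finset.sum_congr rfl fun j _ => by
            rw [mul_pow, mul_pow, mul_pow, Real.sq_sqrt
              (Finset.sum_nonneg fun k _ => sq_nonneg _)]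
            ring,
        peel (w i * Real.sqrt (∑ k, W3 k ^ 2)), mul_pow,
        Real.sq_sqrt (Finset.sum_nonneg fun k _ => sq_nonneg _)]
    calc ∑ i, ∑ j, ∑ k, (w i * w j * W3 k) ^ 2
        = ∑ i, w i ^ 2 * ∑ k, W3 k ^ 2 := Finset.sum_congr rfl fun i _ => e' i
      _ = (∑ i, w i ^ 2) * (∑ k, W3 k ^ 2) := (Finset.sum_mul _ _ _).symm
      _ = ∑ k, W3 k ^ 2 := by rw [hv', one_mul]
      _ ≤ s ^ 2 := hB3
  have n7 : ‖Emb (fun i j k => w i * w j * w k * c0)‖ ≤ s := by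
    refine normEmb_le _ hs ?_
    have e : ∀ i j, (∑ k, (w i * w j * w k * c0) ^ 2) = (w i * w j * c0) ^ 2 := by
      intro i j
      rw [show (∑ k, (w i * w j * w k * c0) ^ 2) = ∑ k, ((w i * w j * c0) * w k) ^ 2 from
        Finset.sum_congr rfl fun k _ => by ring, peel]
    have e' : ∀ i, (∑ j, ∑ k, (w i * w j * w k * c0) ^ 2) = (w i * c0) ^ 2 := by
      intro i
      rw [Finset.sum_congr rfl fun j _ => e i j,
        show (∑ j, (w i * w j * c0) ^ 2) = ∑ j, ((w i * c0) * w j) ^ 2 from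
          Finset.sum_congr rfl fun j _ => by ring, peel]
    calc ∑ i, ∑ j, ∑ k, (w i * w j * w k * c0) ^ 2
        = ∑ i, (w i * c0) ^ 2 := Finset.sum_congr rfl fun i _ => e' i
      _ = ∑ i, (c0 * w i) ^ 2 := Finset.sum_congr rfl fun i _ => by ring
      _ = c0 ^ 2 := peel c0
      _ ≤ s ^ 2 := hBc
  -- decomposition
  have hdec : Emb (fun i j k => C i j k
        - congrAct3 C (1 - Matrix.vecMulVec w w) i j k)
      = Emb (fun i j k => w i * A1 j k) + Emb (fun i j k => w j * A2 i k)
        + Emb (fun i j k => w k * A3 i j)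
        - Emb (fun i j k => w j * w k * W1 i) - Emb (fun i j k => w i * w k * W2 j)
        - Emb (fun i j k => w i * w j * W3 k)
        + Emb (fun i j k => w i * w j * w k * c0) := by
    ext p
    obtain ⟨i, j, k⟩ := p
    simp only [PiLp.add_apply, PiLp.sub_apply, Emb, PiLp.toLp_apply]
    rw [expand' C w i j k]
    simp only [hA1, hA2, hA3, hW1, hW2, hW3, hc0]
    ring
  -- put everything together
  calc Real.sqrt (∑ i, ∑ j, ∑ k,
        (C i j k - congrAct3 C
          (1 - Matrix.vecMulVec (fun i => v i) (fun j => v j)) i j k) ^ 2)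
      = ‖Emb (fun i j k => C i j k
          - congrAct3 C (1 - Matrix.vecMulVec w w) i j k)‖ := (normEmb _).symm
    _ = ‖Emb (fun i j k => w i * A1 j k) + Emb (fun i j k => w j * A2 i k)
        + Emb (fun i j k => w k * A3 i j)
        - Emb (fun i j k => w j * w k * W1 i) - Emb (fun i j k => w i * w k * W2 j)
        - Emb (fun i j k => w i * w j * W3 k)
        + Emb (fun i j k => w i * w j * w k * c0)‖ := by rw [hdec]
    _ ≤ ‖Emb (fun i j k => w i * A1 j k) + Emb (fun i j k => w j * A2 i k)
        + Emb (fun i j k => w k * A3 i j)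
        - Emb (fun i j k => w j * w k * W1 i) - Emb (fun i j k => w i * w k * W2 j)
        - Emb (fun i j k => w i * w j * W3 k)‖
        + ‖Emb (fun i j k => w i * w j * w k * c0)‖ := norm_add_le _ _
    _ ≤ (‖Emb (fun i j k => w i * A1 j k) + Emb (fun i j k => w j * A2 i k)
        + Emb (fun i j k => w k * A3 i j)
        - Emb (fun i j k => w j * w k * W1 i) - Emb (fun i j k => w i * w k * W2 j)‖
        + ‖Emb (fun i j k => w i * w j * W3 k)‖)
        + ‖Emb (fun i j k => w i * w j * w k * c0)‖ :=
        add_le_add_left (norm_sub_le _ _) _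
    _ ≤ ((‖Emb (fun i j k => w i * A1 j k) + Emb (fun i j k => w j * A2 i k)
        + Emb (fun i j k => w k * A3 i j)
        - Emb (fun i j k => w j * w k * W1 i)‖
        + ‖Emb (fun i j k => w i * w k * W2 j)‖)
        + ‖Emb (fun i j k => w i * w j * W3 k)‖)
        + ‖Emb (fun i j k => w i * w j * w k * c0)‖ :=
        add_le_add_left (add_le_add_left (norm_sub_le _ _) _) _
    _ ≤ (((‖Emb (fun i j k => w i * A1 j k) + Emb (fun i j k => w j * A2 i k)
        + Emb (fun i j k => w k * A3 i j)‖
        + ‖Emb (fun i j k => w j * w k * W1 i)‖)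
        + ‖Emb (fun i j k => w i * w k * W2 j)‖)
        + ‖Emb (fun i j k => w i * w j * W3 k)‖)
        + ‖Emb (fun i j k => w i * w j * w k * c0)‖ :=
        add_le_add_left (add_le_add_left (add_le_add_left (norm_sub_le _ _) _) _) _
    _ ≤ ((((‖Emb (fun i j k => w i * A1 j k) + Emb (fun i j k => w j * A2 i k)‖
        + ‖Emb (fun i j k => w k * A3 i j)‖)
        + ‖Emb (fun i j k => w j * w k * W1 i)‖)
        + ‖Emb (fun i j k => w i * w k * W2 j)‖)
        + ‖Emb (fun i j k => w i * w j * W3 k)‖)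
        + ‖Emb (fun i j k => w i * w j * w k * c0)‖ :=
        add_le_add_left (add_le_add_left (add_le_add_left
          (add_le_add_left (norm_add_le _ _) _) _) _) _
    _ ≤ (((((‖Emb (fun i j k => w i * A1 j k)‖ + ‖Emb (fun i j k => w j * A2 i k)‖)
        + ‖Emb (fun i j k => w k * A3 i j)‖)
        + ‖Emb (fun i j k => w j * w k * W1 i)‖)
        + ‖Emb (fun i j k => w i * w k * W2 j)‖)
        + ‖Emb (fun i j k => w i * w j * W3 k)‖)
        + ‖Emb (fun i j k => w i * w j * w k * c0)‖ :=
        add_le_add_left (add_le_add_left (add_le_add_left (add_le_add_left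
          (add_le_add_left (norm_add_le _ _) _) _) _) _) _
    _ ≤ 7 * s := by linarith [n1, n2, n3, n4, n5, n6, n7]
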